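/- arXiv:1809.08830 — 2 statements merged into one kernel-verified Lean document; each statement's English description precedes it below -/
import Mathlib

section
/- Let ρ > 0, let Σ ∈ ℝ^{d×d} be symmetric positive definite, and let D ∈ ℝ^{d×d} be symmetric positive semidefinite with D ≠ 0. For every symmetric positive semidefinite S ∈ ℝ^{d×d} with B(S) ≤ ρ² and every γ ∈ ℝ such that γ I_d − D is positive definite, one has ⟨S, D⟩ ≤ γ·(ρ² − Tr(Σ)) + γ²·Tr((γ I_d − D)^{-1} Σ). -/
open Matrix

-- `msqrt M` is the unique symmetric PSD square root of a symmetric PSD matrix `M` (else `0`).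
open Classical in
noncomputable def msqrt {ι : Type*} [Fintype ι] [DecidableEq ι] (M : Matrix ι ι ℝ) : Matrix ι ι ℝ :=
  if h : M.PosSemidef then
    h.1.eigenvectorUnitary.1 * diagonal (fun i => Real.sqrt (h.1.eigenvalues i)) *
      (star h.1.eigenvectorUnitary : Matrix ι ι ℝ)
  else 0

/-- `Bdist Sg S = Tr(S + Σ − 2(Σ^{1/2} S Σ^{1/2})^{1/2})`. -/
noncomputable def Bdist {ι : Type*} [Fintype ι] [DecidableEq ι] (Sg S : Matrix ι ι ℝ) : ℝ :=
  (S + Sg - (2:ℝ) • msqrt (msqrt Sg * S * msqrt Sg)).trace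


lemma psd_trace_nonneg {n : Type*} [Fintype n] [DecidableEq n] {M : Matrix n n ℝ}
    (hM : M.PosSemidef) : 0 ≤ M.trace := by
  exact hM.trace_nonneg

lemma pd_trace_pos {n : Type*} [Fintype n] [DecidableEq n] [Nonempty n] {M : Matrix n n ℝ}
    (hM : M.PosDef) : 0 < M.trace := by
  exact hM.trace_pos

lemma msqrt_spec {n : Type*} [Fintype n] [DecidableEq n] {M : Matrix n n ℝ}
    (h : M.PosSemidef) : (msqrt M).PosSemidef ∧ msqrt M * msqrt M = M := by
  rw [msqrt, dif_pos h]
  set U := h.1.eigenvectorUnitary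
  constructor
  · have hd : (diagonal fun i => Real.sqrt (h.1.eigenvalues i)).PosSemidef :=
      posSemidef_diagonal_iff.mpr (fun i => Real.sqrt_nonneg _)
    have := hd.mul_mul_conjTranspose_same (U : Matrix n n ℝ)
    simpa [star_eq_conjTranspose] using this
  · have hU : (star U : Matrix n n ℝ) * U = 1 := Unitary.coe_star_mul_self U
    calc _ = (U : Matrix n n ℝ) * (diagonal (fun i => Real.sqrt (h.1.eigenvalues i)) *
          ((star U : Matrix n n ℝ) * U) * diagonal (fun i => Real.sqrt (h.1.eigenvalues i))) *
          (star U : Matrix n n ℝ) := by simp only [Matrix.mul_assoc]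
      _ = (U : Matrix n n ℝ) * diagonal (RCLike.ofReal ∘ h.1.eigenvalues) *
          (star U : Matrix n n ℝ) := by
        rw [hU, Matrix.mul_one, diagonal_mul_diagonal]
        rw [show (fun i => Real.sqrt (h.1.eigenvalues i) * Real.sqrt (h.1.eigenvalues i)) =
          RCLike.ofReal ∘ h.1.eigenvalues from
          funext fun i => by simp [Real.mul_self_sqrt (h.eigenvalues_nonneg i)]]
      _ = M := by
        have := h.1.spectral_theorem
        rw [Unitary.conjStarAlgAut_apply] at this
        exact this.symm

lemma real_conjT {n : Type*} [Fintype n] (A : Matrix n n ℝ) : Aᴴ = Aᵀ := by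
  ext i j; simp [conjTranspose_apply]

/-- Weak duality bound: for every feasible `S` and dual-feasible `γ`,
`⟨S, D⟩ ≤ γ(ρ² − Tr Σ) + γ² Tr((γI − D)⁻¹ Σ)`. -/
theorem stmt3 {d : ℕ} [NeZero d] (ρ : ℝ) (hρ : 0 < ρ) (Sg D : Matrix (Fin d) (Fin d) ℝ)
    (hSg : Sg.PosDef) (hD : D.PosSemidef) (hD0 : D ≠ 0)
    (S : Matrix (Fin d) (Fin d) ℝ) (hS : S.PosSemidef) (hB : Bdist Sg S ≤ ρ ^ 2)
    (γ : ℝ) (hγ : (γ • (1 : Matrix (Fin d) (Fin d) ℝ) - D).PosDef) :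
    (Sᵀ * D).trace ≤ γ * (ρ ^ 2 - Sg.trace) +
      γ ^ 2 * ((γ • (1 : Matrix (Fin d) (Fin d) ℝ) - D)⁻¹ * Sg).trace := by
  haveI : Nonempty (Fin d) := Fin.pos_iff_nonempty.mp (Nat.pos_of_ne_zero (NeZero.ne d))
  set A : Matrix (Fin d) (Fin d) ℝ := γ • (1 : Matrix (Fin d) (Fin d) ℝ) - D with hAdef
  -- γ > 0
  have hγpos : 0 < γ := by
    have h1 : 0 < A.trace := pd_trace_pos hγ
    have h2 : A.trace = γ * d - D.trace := by
      simp [hAdef, Matrix.trace_sub, Matrix.trace_smul, Matrix.trace_one, mul_comm]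
    have h3 : 0 ≤ D.trace := psd_trace_nonneg hD
    have hd : (0:ℝ) < d := by exact_mod_cast Nat.pos_of_ne_zero (NeZero.ne d)
    nlinarith
  -- square root of Sg
  set Q : Matrix (Fin d) (Fin d) ℝ := msqrt Sg with hQdef
  have hQpsd : Q.PosSemidef := (msqrt_spec hSg.posSemidef).1
  have hQQ : Q * Q = Sg := (msqrt_spec hSg.posSemidef).2
  have hmsqrtSg : msqrt Sg = Q := rfl
  have hQherm : Qᴴ = Q := hQpsd.isHermitian
  -- Q is invertible
  have hQdet : IsUnit Q.det := by
    have : Q.det * Q.det = Sg.det := by rw [← Matrix.det_mul, hQQ]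
    have hpos : 0 < Sg.det := hSg.det_pos
    exact isUnit_iff_ne_zero.mpr (fun h => by simp [h] at this; exact hpos.ne' this.symm)
  have hQinv : Q * Q⁻¹ = 1 := Matrix.mul_nonsing_inv Q hQdet
  have hinvQ : Q⁻¹ * Q = 1 := Matrix.nonsing_inv_mul Q hQdet
  have hQinvherm : (Q⁻¹)ᴴ = Q⁻¹ := by rw [Matrix.conjTranspose_nonsing_inv, hQherm]
  -- M and R
  set M : Matrix (Fin d) (Fin d) ℝ := Q * S * Q with hMdef
  have hMpsd : M.PosSemidef := by
    have := hS.mul_mul_conjTranspose_same Q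
    rwa [hQherm] at this
  set R : Matrix (Fin d) (Fin d) ℝ := msqrt M with hRdef
  have hRR : R * R = M := (msqrt_spec hMpsd).2
  have hRpsd : R.PosSemidef := (msqrt_spec hMpsd).1
  have hRherm : Rᴴ = R := hRpsd.isHermitian
  have hmsqrtM : msqrt M = R := rfl
  -- Bdist rewrite
  have hBtr : S.trace + Sg.trace - 2 * R.trace ≤ ρ ^ 2 := by
    have : Bdist Sg S = S.trace + Sg.trace - 2 * R.trace := by
      rw [Bdist, hmsqrtSg, ← hMdef, hmsqrtM, Matrix.trace_sub, Matrix.trace_add,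
        Matrix.trace_smul]
      ring_nf
    linarith [this ▸ hB]
  -- A inverse
  have hAunit : IsUnit A.det := isUnit_iff_ne_zero.mpr hγ.det_pos.ne'
  have hAAinv : A * A⁻¹ = 1 := Matrix.mul_nonsing_inv A hAunit
  have hAinvA : A⁻¹ * A = 1 := Matrix.nonsing_inv_mul A hAunit
  have hAinvherm : (A⁻¹)ᴴ = A⁻¹ := by rw [Matrix.conjTranspose_nonsing_inv, hγ.isHermitian]
  -- C and N
  set C : Matrix (Fin d) (Fin d) ℝ := Q⁻¹ * A * Q⁻¹ with hCdef
  set N : Matrix (Fin d) (Fin d) ℝ := Q * A⁻¹ * Q with hNdef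
  have hCpsd : C.PosSemidef := by
    have := hγ.posSemidef.conjTranspose_mul_mul_same Q⁻¹
    rwa [hQinvherm] at this
  have hNherm : Nᴴ = N := by
    rw [hNdef]
    simp only [Matrix.conjTranspose_mul, hQherm, hAinvherm]
    rw [Matrix.mul_assoc]
  have hNC : N * C = 1 := by
    rw [hNdef, hCdef]
    calc Q * A⁻¹ * Q * (Q⁻¹ * A * Q⁻¹)
        = Q * A⁻¹ * (Q * Q⁻¹) * A * Q⁻¹ := by noncomm_ring
      _ = Q * (A⁻¹ * A) * Q⁻¹ := by rw [hQinv]; noncomm_ring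
      _ = 1 := by rw [hAinvA, Matrix.mul_one, hQinv]
  have hCN : C * N = 1 := by
    rw [hNdef, hCdef]
    calc Q⁻¹ * A * Q⁻¹ * (Q * A⁻¹ * Q)
        = Q⁻¹ * A * (Q⁻¹ * Q) * A⁻¹ * Q := by noncomm_ring
      _ = Q⁻¹ * (A * A⁻¹) * Q := by rw [hinvQ]; noncomm_ring
      _ = 1 := by rw [hAAinv, Matrix.mul_one, hinvQ]
  -- key trace identities
  have hMC : (M * C).trace = (S * A).trace := by
    have : M * C = Q * (S * A * Q⁻¹) := by
      rw [hMdef, hCdef]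
      calc Q * S * Q * (Q⁻¹ * A * Q⁻¹) = Q * S * (Q * Q⁻¹) * A * Q⁻¹ := by noncomm_ring
        _ = Q * (S * A * Q⁻¹) := by rw [hQinv]; noncomm_ring
    rw [this, Matrix.trace_mul_comm, Matrix.mul_assoc, hinvQ, Matrix.mul_one]
  have hNtr : N.trace = (A⁻¹ * Sg).trace := by
    rw [hNdef, Matrix.trace_mul_cycle, hQQ, Matrix.trace_mul_comm]
  -- the key PSD inequality
  set Y : Matrix (Fin d) (Fin d) ℝ := R - γ • N with hYdef
  have hYherm : Yᴴ = Y := by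
    rw [hYdef, Matrix.conjTranspose_sub, Matrix.conjTranspose_smul, hRherm, hNherm, star_trivial]
  have hkey : 0 ≤ (S * A).trace - 2 * γ * R.trace + γ ^ 2 * (A⁻¹ * Sg).trace := by
    have hpsd : (Yᴴ * C * Y).PosSemidef := hCpsd.conjTranspose_mul_mul_same Y
    have htr : 0 ≤ (Yᴴ * C * Y).trace := psd_trace_nonneg hpsd
    set G : Matrix (Fin d) (Fin d) ℝ := γ • N with hGdef
    have hGC : G * C = γ • (1 : Matrix (Fin d) (Fin d) ℝ) := by
      rw [hGdef, Matrix.smul_mul, hNC]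
    have hCG : C * G = γ • (1 : Matrix (Fin d) (Fin d) ℝ) := by
      rw [hGdef, Matrix.mul_smul, hCN]
    have e1 : (R - G) * C * (R - G) = R * C * R - (G * C) * R - R * (C * G) + (G * C) * G := by
      noncomm_ring
    have hem : Yᴴ * C * Y = R * C * R - γ • R - γ • R + (γ * γ) • N := by
      rw [hYherm, hYdef, e1, hGC, hCG, hGdef]
      simp [Matrix.smul_mul, Matrix.mul_smul, smul_smul]
    have hexp : (Yᴴ * C * Y).trace
        = (S * A).trace - 2 * γ * R.trace + γ ^ 2 * (A⁻¹ * Sg).trace := by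
      rw [hem, Matrix.trace_add, Matrix.trace_sub, Matrix.trace_sub, Matrix.trace_smul]
      have hRCR : (R * C * R).trace = (S * A).trace := by
        rw [Matrix.trace_mul_cycle R C R, hRR, hMC]
      rw [hRCR]
      simp only [Matrix.trace_smul, smul_eq_mul]
      rw [hNtr]
      ring
    linarith [hexp ▸ htr]
  -- left side
  have hLHS : (Sᵀ * D).trace = γ * S.trace - (S * A).trace := by
    have hSsym : Sᵀ = S := by rw [← real_conjT, hS.isHermitian]
    have hDA : D = γ • (1 : Matrix (Fin d) (Fin d) ℝ) - A := by rw [hAdef]; abel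
    rw [hSsym, hDA, Matrix.mul_sub, Matrix.trace_sub, Matrix.mul_smul, Matrix.mul_one,
      Matrix.trace_smul, smul_eq_mul]
  rw [hLHS]
  nlinarith [mul_le_mul_of_nonneg_left hBtr hγpos.le]
end

section
/- Let ρ > 0, let Σ ∈ ℝ^{d×d} be symmetric positive definite, and let D ∈ ℝ^{d×d} be symmetric positive semidefinite with D ≠ 0. Let λ₁ be the largest eigenvalue of D and v₁ a corresponding unit eigenvector. If γ⋆ ∈ ℝ satisfies that γ⋆ I_d − D is positive definite and Tr(Σ (I_d − γ⋆ (γ⋆ I_d − D)^{-1})²) = ρ², then λ₁·(1 + √(v₁ᵀ Σ v₁)/ρ) ≤ γ⋆ ≤ λ₁·(1 + √(Tr Σ)/ρ). -/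
open Matrix

set_option linter.unusedSectionVars false
set_option linter.unusedVariables false
set_option maxHeartbeats 1000000

section aux
variable {ι : Type*} [Fintype ι] [DecidableEq ι]

open scoped MatrixOrder in
lemma psd_factor {P : Matrix ι ι ℝ} (hP : P.PosSemidef) : ∃ R : Matrix ι ι ℝ, P = Rᴴ * R :=
  CStarAlgebra.nonneg_iff_eq_star_mul_self.mp hP.nonneg

lemma trace_mul_self_conjT_nonneg (M : Matrix ι ι ℝ) : 0 ≤ (M * Mᴴ).trace := by
  rw [Matrix.trace]
  refine Finset.sum_nonneg fun i _ => ?_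
  simp only [Matrix.diag_apply, Matrix.mul_apply, Matrix.conjTranspose_apply, star_trivial]
  exact Finset.sum_nonneg fun j _ => mul_self_nonneg _

lemma trace_mul_psd_nonneg {P Q : Matrix ι ι ℝ} (hP : P.PosSemidef) (hQ : Q.PosSemidef) :
    0 ≤ (P * Q).trace := by
  obtain ⟨R, rfl⟩ := psd_factor hP
  obtain ⟨S, rfl⟩ := psd_factor hQ
  have h1 : Rᴴ * R * (Sᴴ * S) = Rᴴ * (R * Sᴴ * S) := by simp [Matrix.mul_assoc]
  have h2 : R * Sᴴ * S * Rᴴ = (R * Sᴴ) * (R * Sᴴ)ᴴ := by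
    rw [Matrix.conjTranspose_mul, Matrix.conjTranspose_conjTranspose, Matrix.mul_assoc]
  rw [h1, Matrix.trace_mul_comm, h2]
  exact trace_mul_self_conjT_nonneg _

lemma trace_mul_vecMulVec (C : Matrix ι ι ℝ) (v w : ι → ℝ) :
    (C * Matrix.vecMulVec v w).trace = w ⬝ᵥ (C *ᵥ v) := by
  simp only [Matrix.trace, Matrix.diag_apply, Matrix.mul_apply, Matrix.vecMulVec_apply,
    Matrix.mulVec, dotProduct, Finset.mul_sum]
  exact Finset.sum_congr rfl fun i _ => Finset.sum_congr rfl fun j _ => by ring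

lemma dot_sq_le (v x : ι → ℝ) : (v ⬝ᵥ x)^2 ≤ (v ⬝ᵥ v) * (x ⬝ᵥ x) := by
  have := Finset.sum_mul_sq_le_sq_mul_sq Finset.univ v x
  simpa [dotProduct, pow_two] using this

lemma dot_self_nonneg (x : ι → ℝ) : 0 ≤ x ⬝ᵥ x :=
  Finset.sum_nonneg fun i _ => mul_self_nonneg _

end aux

/-- Bisection interval: any root `γ⋆` of `Tr(Σ (I − γ⋆(γ⋆ I − D)⁻¹)²) = ρ²` with
`γ⋆ I − D ≻ 0` satisfies `λ₁(1 + √(v₁ᵀ Σ v₁)/ρ) ≤ γ⋆ ≤ λ₁(1 + √(Tr Σ)/ρ)`, where `λ₁` is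
the largest eigenvalue of `D` and `v₁` a corresponding unit eigenvector. -/
theorem stmt7 {d : ℕ} [NeZero d] (ρ : ℝ) (hρ : 0 < ρ) (Sg D : Matrix (Fin d) (Fin d) ℝ)
    (hSg : Sg.PosDef) (hD : D.PosSemidef) (hD0 : D ≠ 0)
    (lam1 : ℝ) (v1 : Fin d → ℝ)
    (hv1 : v1 ⬝ᵥ v1 = 1) (heig : D *ᵥ v1 = lam1 • v1)
    (hmax : ∀ x : Fin d → ℝ, x ⬝ᵥ (D *ᵥ x) ≤ lam1 * (x ⬝ᵥ x))
    (γs : ℝ) (hγs : (γs • (1 : Matrix (Fin d) (Fin d) ℝ) - D).PosDef)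
    (hroot : (Sg * (1 - γs • (γs • (1 : Matrix (Fin d) (Fin d) ℝ) - D)⁻¹) ^ 2).trace = ρ ^ 2) :
    lam1 * (1 + Real.sqrt (v1 ⬝ᵥ (Sg *ᵥ v1)) / ρ) ≤ γs ∧
      γs ≤ lam1 * (1 + Real.sqrt Sg.trace / ρ) := by
  set A := γs • (1 : Matrix (Fin d) (Fin d) ℝ) - D with hA_def
  have hAH : A.IsHermitian := hγs.isHermitian
  have hdet : IsUnit A.det := hγs.det_pos.ne'.isUnit
  have hAiA : A⁻¹ * A = 1 := Matrix.nonsing_inv_mul A hdet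
  have hAAi : A * A⁻¹ = 1 := Matrix.mul_nonsing_inv A hdet
  have hADcomm : A * D = D * A := by
    rw [hA_def, Matrix.sub_mul, Matrix.mul_sub, Matrix.smul_mul, Matrix.mul_smul,
      one_mul, mul_one]
  have hDAi : D * A⁻¹ = A⁻¹ * D := by
    calc D * A⁻¹ = (A⁻¹ * A) * (D * A⁻¹) := by rw [hAiA, one_mul]
      _ = A⁻¹ * (A * D) * A⁻¹ := by simp only [Matrix.mul_assoc]
      _ = A⁻¹ * (D * A) * A⁻¹ := by rw [hADcomm]
      _ = A⁻¹ * D * (A * A⁻¹) := by simp only [Matrix.mul_assoc]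
      _ = A⁻¹ * D := by rw [hAAi, mul_one]
  set B := A⁻¹ * D with hB_def
  have hBH : Bᴴ = B := by
    rw [hB_def, Matrix.conjTranspose_mul, Matrix.conjTranspose_nonsing_inv, hAH.eq,
      hD.isHermitian.eq, hDAi]
  -- the matrix in the root equation equals -B
  have hMB : (1 : Matrix (Fin d) (Fin d) ℝ) - γs • A⁻¹ = -B := by
    have h0 : A * ((1 : Matrix (Fin d) (Fin d) ℝ) - γs • A⁻¹) = -D := by
      rw [Matrix.mul_sub, mul_one, Matrix.mul_smul, hAAi, hA_def]
      abel
    calc (1 : Matrix (Fin d) (Fin d) ℝ) - γs • A⁻¹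
        = A⁻¹ * (A * ((1 : Matrix (Fin d) (Fin d) ℝ) - γs • A⁻¹)) := by
          rw [← Matrix.mul_assoc, hAiA, one_mul]
      _ = A⁻¹ * (-D) := by rw [h0]
      _ = -B := by rw [Matrix.mul_neg, hB_def]
  have hroot' : (Sg * (B * B)).trace = ρ ^ 2 := by
    rw [← hroot, hMB, neg_sq, pow_two]
  -- eigen facts
  have hv1ne : v1 ≠ 0 := by
    intro h; rw [h] at hv1; simp at hv1
  have hlam_eq : v1 ⬝ᵥ (D *ᵥ v1) = lam1 := by
    rw [heig, dotProduct_smul, smul_eq_mul, hv1, mul_one]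
  have hlam1_nonneg : 0 ≤ lam1 := by
    have := hD.dotProduct_mulVec_nonneg v1
    simpa [hlam_eq] using this
  have hAv1 : A *ᵥ v1 = (γs - lam1) • v1 := by
    rw [hA_def, Matrix.sub_mulVec, Matrix.smul_mulVec, Matrix.one_mulVec, heig, sub_smul]
  have hc : 0 < γs - lam1 := by
    have h := hγs.dotProduct_mulVec_pos hv1ne
    rw [hAv1] at h
    simpa [dotProduct_smul, hv1] using h
  set c := γs - lam1 with hc_def
  set μ := lam1 / c with hμ_def
  have hμ : 0 ≤ μ := div_nonneg hlam1_nonneg hc.le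
  have hAiv1 : A⁻¹ *ᵥ v1 = c⁻¹ • v1 := by
    have h1 : A⁻¹ *ᵥ (A *ᵥ v1) = v1 := by
      rw [Matrix.mulVec_mulVec, hAiA, Matrix.one_mulVec]
    rw [hAv1, Matrix.mulVec_smul] at h1
    have h2 := congrArg (fun w : Fin d → ℝ => c⁻¹ • w) h1
    simpa [smul_smul, inv_mul_cancel₀ hc.ne'] using h2
  have hBv1 : B *ᵥ v1 = μ • v1 := by
    rw [hB_def, ← Matrix.mulVec_mulVec, heig, Matrix.mulVec_smul, hAiv1, smul_smul, hμ_def,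
      div_eq_mul_inv]
  -- symmetric dot product lemma for B
  have hBT : Bᵀ = B := by
    ext i j
    simpa [Matrix.transpose_apply] using congrFun (congrFun hBH i) j
  have hdotB : ∀ x w : Fin d → ℝ, x ⬝ᵥ (B *ᵥ w) = (B *ᵥ x) ⬝ᵥ w := by
    intro x w
    rw [Matrix.dotProduct_mulVec, ← Matrix.mulVec_transpose, hBT]
  -- Cauchy-Schwarz for the D-form
  obtain ⟨R, hR⟩ := psd_factor hD
  have hdform : ∀ z x : Fin d → ℝ, z ⬝ᵥ (D *ᵥ x) = (R *ᵥ z) ⬝ᵥ (R *ᵥ x) := by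
    intro z x
    rw [hR, ← Matrix.mulVec_mulVec, Matrix.dotProduct_mulVec, Matrix.vecMul_conjTranspose]
    simp
  have hCSD : ∀ z x : Fin d → ℝ,
      z ⬝ᵥ (D *ᵥ x) ≤ lam1 * (Real.sqrt (z ⬝ᵥ z) * Real.sqrt (x ⬝ᵥ x)) := by
    intro z x
    have h2 : ((R *ᵥ z) ⬝ᵥ (R *ᵥ x))^2 ≤ (z ⬝ᵥ (D *ᵥ z)) * (x ⬝ᵥ (D *ᵥ x)) := by
      rw [hdform z z, hdform x x]; exact dot_sq_le _ _
    have hzz : (0:ℝ) ≤ z ⬝ᵥ (D *ᵥ z) := by rw [hdform z z]; exact dot_self_nonneg _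
    have hxx : (0:ℝ) ≤ x ⬝ᵥ (D *ᵥ x) := by rw [hdform x x]; exact dot_self_nonneg _
    calc z ⬝ᵥ (D *ᵥ x) = (R *ᵥ z) ⬝ᵥ (R *ᵥ x) := hdform z x
      _ ≤ Real.sqrt (((R *ᵥ z) ⬝ᵥ (R *ᵥ x))^2) := by
          rw [Real.sqrt_sq_eq_abs]; exact le_abs_self _
      _ ≤ Real.sqrt ((z ⬝ᵥ (D *ᵥ z)) * (x ⬝ᵥ (D *ᵥ x))) := Real.sqrt_le_sqrt h2
      _ ≤ Real.sqrt ((lam1 * (z ⬝ᵥ z)) * (lam1 * (x ⬝ᵥ x))) := by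
          refine Real.sqrt_le_sqrt (mul_le_mul (hmax z) (hmax x) hxx ?_)
          exact mul_nonneg hlam1_nonneg (dot_self_nonneg z)
      _ = lam1 * (Real.sqrt (z ⬝ᵥ z) * Real.sqrt (x ⬝ᵥ x)) := by
          rw [show (lam1 * (z ⬝ᵥ z)) * (lam1 * (x ⬝ᵥ x))
              = lam1^2 * ((z ⬝ᵥ z) * (x ⬝ᵥ x)) by ring,
            Real.sqrt_mul (sq_nonneg lam1), Real.sqrt_sq hlam1_nonneg,
            Real.sqrt_mul (dot_self_nonneg z)]
  -- key operator norm bound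
  have hkey : ∀ x : Fin d → ℝ, (B *ᵥ x) ⬝ᵥ (B *ᵥ x) ≤ μ^2 * (x ⬝ᵥ x) := by
    intro x
    set z := B *ᵥ x with hz_def
    have hAz : A *ᵥ z = D *ᵥ x := by
      rw [hz_def, Matrix.mulVec_mulVec, ← Matrix.mul_assoc, hAAi, one_mul]
    have hAz' : γs • z - D *ᵥ z = D *ᵥ x := by
      rw [← hAz, hA_def, Matrix.sub_mulVec, Matrix.smul_mulVec, Matrix.one_mulVec]
    have hsum : γs * (z ⬝ᵥ z) = z ⬝ᵥ (D *ᵥ z) + z ⬝ᵥ (D *ᵥ x) := by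
      have := congrArg (fun w => z ⬝ᵥ w) hAz'
      simp only [dotProduct_sub, dotProduct_smul, smul_eq_mul] at this
      linarith
    set N := Real.sqrt (z ⬝ᵥ z) with hN_def
    set M := Real.sqrt (x ⬝ᵥ x) with hM_def
    have hN2 : z ⬝ᵥ z = N^2 := (Real.sq_sqrt (dot_self_nonneg z)).symm
    have hM2 : x ⬝ᵥ x = M^2 := (Real.sq_sqrt (dot_self_nonneg x)).symm
    have hN0 : 0 ≤ N := Real.sqrt_nonneg _
    have hM0 : 0 ≤ M := Real.sqrt_nonneg _
    have hbound : c * N^2 ≤ lam1 * N * M := by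
      have h1 := hmax z
      have h2 := hCSD z x
      rw [← hN_def, ← hM_def] at h2
      rw [hN2] at hsum h1
      rw [hc_def]
      nlinarith [hsum, h1, h2]
    rcases eq_or_lt_of_le hN0 with hN | hN
    · rw [hN2, ← hN]
      have : (0:ℝ)^2 = 0 := by norm_num
      rw [this]
      exact mul_nonneg (sq_nonneg μ) (dot_self_nonneg x)
    · have h3 : c * N ≤ lam1 * M := by
        have := le_of_mul_le_mul_right (by nlinarith [hbound] : c * N * N ≤ lam1 * M * N) hN
        exact this
      have h4 : N ≤ μ * M := by
        rw [hμ_def, div_mul_eq_mul_div, le_div_iff₀ hc]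
        nlinarith [h3]
      rw [hN2, hM2]
      nlinarith [h4, hN0, mul_nonneg hμ hM0]
  -- PSD of μ²I - B²
  have hKpsd : (μ^2 • (1 : Matrix (Fin d) (Fin d) ℝ) - B * B).PosSemidef := by
    refine Matrix.PosSemidef.of_dotProduct_mulVec_nonneg ?_ ?_
    · unfold Matrix.IsHermitian
      rw [Matrix.conjTranspose_sub, Matrix.conjTranspose_smul, Matrix.conjTranspose_one,
        Matrix.conjTranspose_mul, hBH]
      simp
    · intro x
      have hx : (x : Fin d → ℝ) ⬝ᵥ ((B * B) *ᵥ x) = (B *ᵥ x) ⬝ᵥ (B *ᵥ x) := by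
        rw [← Matrix.mulVec_mulVec, hdotB]
      simp only [star_trivial, Matrix.sub_mulVec, Matrix.smul_mulVec, Matrix.one_mulVec,
        dotProduct_sub, dotProduct_smul, smul_eq_mul]
      rw [hx]
      have := hkey x
      linarith
  -- upper bound: ρ² ≤ μ² Tr Σ
  have hub : ρ^2 ≤ μ^2 * Sg.trace := by
    have h0 := trace_mul_psd_nonneg hSg.posSemidef hKpsd
    have hexp : Sg * (μ^2 • (1 : Matrix (Fin d) (Fin d) ℝ) - B * B)
        = μ^2 • Sg - Sg * (B * B) := by
      rw [Matrix.mul_sub, Matrix.mul_smul, mul_one]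
    rw [hexp, Matrix.trace_sub, Matrix.trace_smul, hroot', smul_eq_mul] at h0
    linarith
  -- lower bound: μ² (v₁ᵀ Σ v₁) ≤ ρ²
  have hlb : μ^2 * (v1 ⬝ᵥ (Sg *ᵥ v1)) ≤ ρ^2 := by
    have hCpsd : (Bᴴ * Sg * B).PosSemidef := hSg.posSemidef.conjTranspose_mul_mul_same B
    rw [hBH] at hCpsd
    have hPpsd : ((1 : Matrix (Fin d) (Fin d) ℝ) - Matrix.vecMulVec v1 v1).PosSemidef := by
      refine Matrix.PosSemidef.of_dotProduct_mulVec_nonneg ?_ ?_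
      · unfold Matrix.IsHermitian
        rw [Matrix.conjTranspose_sub, Matrix.conjTranspose_one]
        congr 1
        ext i j
        simp [Matrix.conjTranspose_apply, Matrix.vecMulVec_apply, mul_comm]
      · intro x
        have hvv : x ⬝ᵥ (Matrix.vecMulVec v1 v1 *ᵥ x) = (v1 ⬝ᵥ x)^2 := by
          simp only [Matrix.mulVec, Matrix.vecMulVec_apply, dotProduct, pow_two,
            Finset.mul_sum, Finset.sum_mul]
          rw [Finset.sum_comm]
          exact Finset.sum_congr rfl fun i _ => Finset.sum_congr rfl fun j _ => by ring
        simp only [star_trivial, Matrix.sub_mulVec, Matrix.one_mulVec, dotProduct_sub]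
        rw [hvv]
        have := dot_sq_le v1 x
        rw [hv1, one_mul] at this
        linarith
    have h0 := trace_mul_psd_nonneg hCpsd hPpsd
    have hexp : (B * Sg * B) * ((1 : Matrix (Fin d) (Fin d) ℝ) - Matrix.vecMulVec v1 v1)
        = (B * Sg * B) - (B * Sg * B) * Matrix.vecMulVec v1 v1 := by
      rw [Matrix.mul_sub, mul_one]
    rw [hexp, Matrix.trace_sub, trace_mul_vecMulVec] at h0
    -- trace of B Sg B equals ρ²
    have htr : (B * Sg * B).trace = ρ^2 := by
      rw [← hroot']
      rw [Matrix.trace_mul_comm (B * Sg) B, ← Matrix.mul_assoc, Matrix.trace_mul_comm]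
    -- the quadratic form value
    have hform : v1 ⬝ᵥ ((B * Sg * B) *ᵥ v1) = μ^2 * (v1 ⬝ᵥ (Sg *ᵥ v1)) := by
      rw [← Matrix.mulVec_mulVec, hBv1, ← Matrix.mulVec_mulVec, Matrix.mulVec_smul,
        Matrix.mulVec_smul, dotProduct_smul, hdotB, hBv1, smul_dotProduct, smul_eq_mul,
        smul_eq_mul, pow_two]
      ring
    rw [htr, hform] at h0
    linarith
  -- positivity of the inner products
  have hs0 : 0 ≤ v1 ⬝ᵥ (Sg *ᵥ v1) := by
    have := hSg.posSemidef.dotProduct_mulVec_nonneg v1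
    simpa using this
  have hT0 : 0 ≤ Sg.trace := by
    have := trace_mul_psd_nonneg hSg.posSemidef (Matrix.PosSemidef.one (n := Fin d) (R := ℝ))
    simpa using this
  -- sqrt inequalities
  have h1 : μ * Real.sqrt (v1 ⬝ᵥ (Sg *ᵥ v1)) ≤ ρ := by
    have := Real.sqrt_le_sqrt hlb
    rwa [Real.sqrt_mul (sq_nonneg μ), Real.sqrt_sq hμ, Real.sqrt_sq hρ.le] at this
  have h2 : ρ ≤ μ * Real.sqrt Sg.trace := by
    have := Real.sqrt_le_sqrt hub
    rwa [Real.sqrt_mul (sq_nonneg μ), Real.sqrt_sq hμ, Real.sqrt_sq hρ.le] at this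
  constructor
  · have h3 : lam1 * Real.sqrt (v1 ⬝ᵥ (Sg *ᵥ v1)) ≤ c * ρ := by
      have h5 := mul_le_mul_of_nonneg_left h1 hc.le
      have h6 : c * (μ * Real.sqrt (v1 ⬝ᵥ (Sg *ᵥ v1)))
          = lam1 * Real.sqrt (v1 ⬝ᵥ (Sg *ᵥ v1)) := by
        rw [hμ_def]; field_simp
      linarith [h6 ▸ h5]
    have h4 : lam1 * Real.sqrt (v1 ⬝ᵥ (Sg *ᵥ v1)) / ρ ≤ c := by
      rw [div_le_iff₀ hρ]; linarith
    calc lam1 * (1 + Real.sqrt (v1 ⬝ᵥ (Sg *ᵥ v1)) / ρ)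
        = lam1 + lam1 * Real.sqrt (v1 ⬝ᵥ (Sg *ᵥ v1)) / ρ := by ring
      _ ≤ lam1 + c := by linarith
      _ = γs := by rw [hc_def]; ring
  · have h3 : c * ρ ≤ lam1 * Real.sqrt Sg.trace := by
      have h5 := mul_le_mul_of_nonneg_left h2 hc.le
      have h6 : c * (μ * Real.sqrt Sg.trace) = lam1 * Real.sqrt Sg.trace := by
        rw [hμ_def]; field_simp
      linarith [h6 ▸ h5]
    have h4 : c ≤ lam1 * Real.sqrt Sg.trace / ρ := by
      rw [le_div_iff₀ hρ]; linarith
    calc γs = lam1 + c := by rw [hc_def]; ring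
      _ ≤ lam1 + lam1 * Real.sqrt Sg.trace / ρ := by linarith
      _ = lam1 * (1 + Real.sqrt Sg.trace / ρ) := by ring
end
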